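/- Consider the two-color Pólya urn process (w₁[n], w₂[n])_{n≥0} with deterministic initial values w₁[0], w₂[0] > 0 and fixed rewards Δ₁ > Δ₂ > 0, where at each step n+1, conditionally on the past, with probability w₁[n]/(w₁[n]+w₂[n]) one sets w₁[n+1] = w₁[n]+Δ₁ and w₂[n+1] = w₂[n], and otherwise sets w₂[n+1] = w₂[n]+Δ₂ and w₁[n+1] = w₁[n]. Then Z_n = w₂[n]/(w₁[n]+w₂[n]) converges to 0 almost surely as n → ∞. -/

import Mathlib

open MeasureTheory Filter

open Topology
open scoped NNReal ENNReal

set_option maxHeartbeats 2000000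

lemma polya_key_drift {Δ₁ Δ₂ x y : ℝ} (hΔ₂ : 0 < Δ₂) (hΔ : Δ₂ < Δ₁)
    (hx : 0 < x) (hy : 0 < y) (hW : Δ₁ * (Δ₁ + Δ₂) / (Δ₁ - Δ₂) ≤ x) :
    x / (x + y) * (y / (x + Δ₁)) + y / (x + y) * ((y + Δ₂) / x)
      ≤ y / x * (1 - (Δ₁ - Δ₂) / 2 / (x + y)) := by
  have hd : 0 < Δ₁ - Δ₂ := by linarith
  have hxy : 0 < x + y := by linarith
  have hx1 : 0 < x + Δ₁ := by linarith
  have hWx : Δ₁ * (Δ₁ + Δ₂) ≤ x * (Δ₁ - Δ₂) := by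
    rw [div_le_iff₀ hd] at hW; linarith
  rw [← sub_nonneg]
  have expand : y / x * (1 - (Δ₁ - Δ₂) / 2 / (x + y)) -
      (x / (x + y) * (y / (x + Δ₁)) + y / (x + y) * ((y + Δ₂) / x))
      = y * (x * (Δ₁ - Δ₂) - Δ₁ * (Δ₁ + Δ₂))
        / (2 * (x * (x + y) * (x + Δ₁))) := by
    field_simp
    ring
  rw [expand]
  apply div_nonneg _ (by positivity)
  have : 0 ≤ x * (Δ₁ - Δ₂) - Δ₁ * (Δ₁ + Δ₂) := by linarith
  positivity

/-- Two-color Pólya urn with rewards `Δ₁ > Δ₂ > 0`: the normalized weight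
`Z_n = w₂[n]/(w₁[n]+w₂[n])` of the color with the smaller reward converges to `0`
almost surely. -/
theorem polya_urn_beta_edge_vanishes
    {Ω : Type*} {m0 : MeasurableSpace Ω} {μ : Measure Ω} [IsProbabilityMeasure μ]
    (ℱ : Filtration ℕ m0)
    (w₁ w₂ : ℕ → Ω → ℝ) (ξ : ℕ → Ω → Bool)
    (a₁ a₂ Δ₁ Δ₂ : ℝ)
    (ha₁ : 0 < a₁) (ha₂ : 0 < a₂) (hΔ₂ : 0 < Δ₂) (hΔ : Δ₂ < Δ₁)
    (hw₁0 : ∀ ω, w₁ 0 ω = a₁) (hw₂0 : ∀ ω, w₂ 0 ω = a₂)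
    (hξ : ∀ n, Measurable[ℱ (n + 1)] (ξ n))
    (hsel : ∀ n, μ[(fun ω => if ξ n ω then (1 : ℝ) else 0) | ℱ n]
        =ᵐ[μ] fun ω => w₁ n ω / (w₁ n ω + w₂ n ω))
    (hrec₁ : ∀ n ω, w₁ (n + 1) ω = if ξ n ω then w₁ n ω + Δ₁ else w₁ n ω)
    (hrec₂ : ∀ n ω, w₂ (n + 1) ω = if ξ n ω then w₂ n ω else w₂ n ω + Δ₂) :
    ∀ᵐ ω ∂μ, Tendsto (fun n => w₂ n ω / (w₁ n ω + w₂ n ω)) atTop (nhds 0) := by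
  classical
  have hΔ₁ : 0 < Δ₁ := lt_trans hΔ₂ hΔ
  -- basic pointwise bounds
  have hw₁lb : ∀ n ω, a₁ ≤ w₁ n ω := by
    intro n; induction n with
    | zero => intro ω; rw [hw₁0]
    | succ n ih => intro ω; rw [hrec₁]; split <;> [linarith [ih ω]; exact ih ω]
  have hw₂lb : ∀ n ω, a₂ ≤ w₂ n ω := by
    intro n; induction n with
    | zero => intro ω; rw [hw₂0]
    | succ n ih => intro ω; rw [hrec₂]; split <;> [exact ih ω; linarith [ih ω]]
  have hw₁pos : ∀ n ω, 0 < w₁ n ω := fun n ω => lt_of_lt_of_le ha₁ (hw₁lb n ω)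
  have hw₂pos : ∀ n ω, 0 < w₂ n ω := fun n ω => lt_of_lt_of_le ha₂ (hw₂lb n ω)
  have hSpos : ∀ n ω, 0 < w₁ n ω + w₂ n ω := fun n ω => add_pos (hw₁pos n ω) (hw₂pos n ω)
  have hw₁mono : ∀ ω ⦃n m : ℕ⦄, n ≤ m → w₁ n ω ≤ w₁ m ω := by
    intro ω
    apply monotone_nat_of_le_succ
    intro n; rw [hrec₁]; split <;> linarith
  have hSub : ∀ n ω, w₁ n ω + w₂ n ω ≤ (a₁ + a₂) + n * Δ₁ := by
    intro n; induction n with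
    | zero => intro ω; rw [hw₁0, hw₂0]; simp
    | succ n ih =>
      intro ω
      have := ih ω
      rw [hrec₁, hrec₂]
      push_cast
      split <;> nlinarith
  have hw₂ub : ∀ n ω, w₂ n ω ≤ a₂ + n * Δ₂ := by
    intro n; induction n with
    | zero => intro ω; rw [hw₂0]; simp
    | succ n ih =>
      intro ω
      have := ih ω
      rw [hrec₂]
      push_cast
      split <;> nlinarith
  -- measurability
  have hmξ : ∀ n, MeasurableSet[ℱ (n+1)] {ω | ξ n ω = true} :=
    fun n => hξ n (measurableSet_singleton true)
  have hmw : ∀ n, Measurable[ℱ n] (w₁ n) ∧ Measurable[ℱ n] (w₂ n) := by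
    intro n; induction n with
    | zero =>
      have e1 : w₁ 0 = fun _ => a₁ := funext hw₁0
      have e2 : w₂ 0 = fun _ => a₂ := funext hw₂0
      rw [e1, e2]
      exact ⟨measurable_const, measurable_const⟩
    | succ n ih =>
      have h1 : Measurable[ℱ (n+1)] (w₁ n) := ih.1.mono (ℱ.mono n.le_succ) le_rfl
      have h2 : Measurable[ℱ (n+1)] (w₂ n) := ih.2.mono (ℱ.mono n.le_succ) le_rfl
      constructor
      · have : w₁ (n+1) = fun ω => if ξ n ω = true then w₁ n ω + Δ₁ else w₁ n ω := by
          funext ω; rw [hrec₁]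
        rw [this]
        exact Measurable.ite (hmξ n) (h1.add measurable_const) h1
      · have : w₂ (n+1) = fun ω => if ξ n ω = true then w₂ n ω else w₂ n ω + Δ₂ := by
          funext ω; rw [hrec₂]
        rw [this]
        exact Measurable.ite (hmξ n) h2 (h2.add measurable_const)
  have hmw₁ : ∀ n, Measurable[ℱ n] (w₁ n) := fun n => (hmw n).1
  have hmw₂ : ∀ n, Measurable[ℱ n] (w₂ n) := fun n => (hmw n).2
  -- integrability helper
  have hint : ∀ (f : Ω → ℝ) (C : ℝ), Measurable f → (∀ ω, |f ω| ≤ C) → Integrable f μ := by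
    intro f C hf hC
    exact (integrable_const C).mono' hf.aestronglyMeasurable
      (ae_of_all _ fun ω => by simpa [Real.norm_eq_abs] using hC ω)
  have hmR : ∀ n, Measurable (fun ω => w₂ n ω / w₁ n ω) :=
    fun n => ((hmw₂ n).mono (ℱ.le n) le_rfl).div ((hmw₁ n).mono (ℱ.le n) le_rfl)
  have hRb : ∀ n ω, w₂ n ω / w₁ n ω ≤ (a₂ + n * Δ₂) / a₁ :=
    fun n ω => div_le_div₀ (by positivity) (hw₂ub n ω) ha₁ (hw₁lb n ω)
  have hRnonneg : ∀ n ω, 0 ≤ w₂ n ω / w₁ n ω :=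
    fun n ω => div_nonneg (hw₂pos n ω).le (hw₁pos n ω).le
  have hRint : ∀ n, Integrable (fun ω => w₂ n ω / w₁ n ω) μ := by
    intro n
    apply hint _ ((a₂ + n * Δ₂) / a₁) (hmR n)
    intro ω
    rw [abs_of_nonneg (hRnonneg n ω)]
    exact hRb n ω
  -- one-step conditional expectation identity
  have hstep : ∀ n, μ[(fun ω => w₂ (n+1) ω / w₁ (n+1) ω) | ℱ n] =ᵐ[μ]
      (fun ω => (w₁ n ω / (w₁ n ω + w₂ n ω)) * (w₂ n ω / (w₁ n ω + Δ₁))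
        + (w₂ n ω / (w₁ n ω + w₂ n ω)) * ((w₂ n ω + Δ₂) / w₁ n ω)) := by
    intro n
    have hC : (0:ℝ) < (a₂ + n * Δ₂ + Δ₂) / a₁ := by positivity
    set C : ℝ := (a₂ + n * Δ₂ + Δ₂) / a₁ with hCdef
    set φ : Ω → ℝ := fun ω => if ξ n ω then (1:ℝ) else 0 with hφdef
    set h₀ : Ω → ℝ := fun ω => (w₂ n ω + Δ₂) / w₁ n ω with hh₀
    set h₁ : Ω → ℝ := fun ω => w₂ n ω / (w₁ n ω + Δ₁) - (w₂ n ω + Δ₂) / w₁ n ω with hh₁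
    have hb0 : ∀ ω, 0 ≤ h₀ ω ∧ h₀ ω ≤ C := by
      intro ω
      constructor
      · exact div_nonneg (by linarith [hw₂pos n ω]) (hw₁pos n ω).le
      · exact div_le_div₀ (by positivity) (by linarith [hw₂ub n ω]) ha₁ (hw₁lb n ω)
    have hb1 : ∀ ω, 0 ≤ w₂ n ω / (w₁ n ω + Δ₁) ∧ w₂ n ω / (w₁ n ω + Δ₁) ≤ C := by
      intro ω
      have h1 : (0:ℝ) < w₁ n ω + Δ₁ := by linarith [hw₁pos n ω]
      constructor
      · exact div_nonneg (hw₂pos n ω).le h1.le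
      · exact div_le_div₀ (by positivity) (by linarith [hw₂ub n ω]) ha₁ (by linarith [hw₁lb n ω])
    have hmh₀ : Measurable[ℱ n] h₀ := ((hmw₂ n).add measurable_const).div (hmw₁ n)
    have hmh₁ : Measurable[ℱ n] h₁ :=
      (((hmw₂ n).div ((hmw₁ n).add measurable_const)).sub hmh₀)
    have hmφ : Measurable φ := by
      apply Measurable.ite ((ℱ.le (n+1)) _ (hmξ n)) measurable_const measurable_const
    have hinth₀ : Integrable h₀ μ := by
      apply hint _ C (hmh₀.mono (ℱ.le n) le_rfl)
      intro ω
      rw [abs_of_nonneg (hb0 ω).1]; exact (hb0 ω).2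
    have hinth₁φ : Integrable (h₁ * φ) μ := by
      apply hint _ C ((hmh₁.mono (ℱ.le n) le_rfl).mul hmφ)
      intro ω
      have hφ01 : φ ω = 0 ∨ φ ω = 1 := by
        simp only [hφdef]; split <;> simp
      rcases hφ01 with h | h <;>
        simp only [Pi.mul_apply, h, mul_zero, mul_one, abs_zero]
      · exact hC.le
      · have e : h₁ ω = w₂ n ω / (w₁ n ω + Δ₁) - h₀ ω := rfl
        rw [e]
        exact abs_le.2 ⟨by linarith [(hb0 ω).2, (hb1 ω).1], by linarith [(hb0 ω).1, (hb1 ω).2]⟩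
    have hintφ : Integrable φ μ := by
      apply hint _ 1 hmφ
      intro ω; simp only [hφdef]; split <;> simp
    have hdecomp : (fun ω => w₂ (n+1) ω / w₁ (n+1) ω) = h₀ + h₁ * φ := by
      funext ω
      simp only [Pi.add_apply, Pi.mul_apply, hh₀, hh₁, hφdef]
      rw [hrec₁, hrec₂]
      by_cases h : ξ n ω <;> simp [h]
    rw [hdecomp]
    calc μ[h₀ + h₁ * φ | ℱ n] =ᵐ[μ] μ[h₀ | ℱ n] + μ[h₁ * φ | ℱ n] :=
          condExp_add hinth₀ hinth₁φ _
      _ =ᵐ[μ] h₀ + h₁ * μ[φ | ℱ n] := by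
          refine EventuallyEq.add ?_ ?_
          · rw [condExp_of_stronglyMeasurable (ℱ.le n) hmh₀.stronglyMeasurable hinth₀]
          · exact condExp_mul_of_stronglyMeasurable_left hmh₁.stronglyMeasurable hinth₁φ hintφ
      _ =ᵐ[μ] h₀ + h₁ * (fun ω => w₁ n ω / (w₁ n ω + w₂ n ω)) := by
          exact EventuallyEq.add (EventuallyEq.refl _ _)
            (EventuallyEq.mul (EventuallyEq.refl _ h₁) (hsel n))
      _ = (fun ω => (w₁ n ω / (w₁ n ω + w₂ n ω)) * (w₂ n ω / (w₁ n ω + Δ₁))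
            + (w₂ n ω / (w₁ n ω + w₂ n ω)) * ((w₂ n ω + Δ₂) / w₁ n ω)) := by
          funext ω
          simp only [Pi.add_apply, Pi.mul_apply, hh₀, hh₁]
          have h1 : w₁ n ω ≠ 0 := (hw₁pos n ω).ne'
          have h2 : w₁ n ω + w₂ n ω ≠ 0 := (hSpos n ω).ne'
          have h3 : w₁ n ω + Δ₁ ≠ 0 := by nlinarith [hw₁pos n ω]
          field_simp
          ring
  -- Borel-Cantelli: a.s. w₁ exceeds any bound eventually
  set W : ℝ := Δ₁ * (Δ₁ + Δ₂) / (Δ₁ - Δ₂) with hWdef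
  have hBC : ∀ᵐ ω ∂μ, ∃ m, W ≤ w₁ m ω := by
    set s : ℕ → Set Ω := fun n => match n with
      | 0 => (∅ : Set Ω)
      | (k+1) => {ω | ξ k ω = true} with hsdef
    have hs : ∀ n, MeasurableSet[ℱ n] (s n) := by
      intro n
      match n with
      | 0 => exact @MeasurableSet.empty Ω (ℱ 0)
      | (k+1) => exact hmξ k
    have hcondeq : ∀ᵐ ω ∂μ, ∀ k : ℕ,
        (μ[(s (k+1)).indicator (1 : Ω → ℝ)|ℱ k]) ω = w₁ k ω / (w₁ k ω + w₂ k ω) := by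
      rw [ae_all_iff]
      intro k
      have e : (s (k+1)).indicator (1 : Ω → ℝ) = fun ω => if ξ k ω then (1:ℝ) else 0 := by
        funext ω
        simp [hsdef, Set.indicator_apply]
      rw [e]
      exact hsel k
    filter_upwards [ae_mem_limsup_atTop_iff μ hs, hcondeq] with ω hω hc
    have hdiv : Tendsto (fun n => ∑ k ∈ Finset.range n,
        (μ[(s (k + 1)).indicator (1 : Ω → ℝ)|ℱ k]) ω) atTop atTop := by
      have hcpos : (0:ℝ) < a₁ / (a₁ + a₂ + Δ₁) := by positivity
      apply tendsto_atTop_mono _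
        (Tendsto.const_mul_atTop hcpos Real.tendsto_sum_range_one_div_nat_succ_atTop)
      intro n
      rw [Finset.mul_sum]
      apply Finset.sum_le_sum
      intro k _
      rw [hc k]
      have hk1 : (0:ℝ) < (k:ℝ) + 1 := by positivity
      have h1 : a₁ / (a₁ + a₂ + Δ₁) * (1 / ((k:ℝ) + 1)) = a₁ / ((a₁ + a₂ + Δ₁) * ((k:ℝ)+1)) := by
        field_simp
      rw [h1]
      have h2 : a₁ / ((a₁ + a₂ + Δ₁) * ((k:ℝ)+1)) ≤ a₁ / (a₁ + a₂ + (k:ℝ) * Δ₁) := by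
        apply div_le_div_of_nonneg_left ha₁.le (by positivity)
        nlinarith
      refine h2.trans ?_
      exact div_le_div₀ (hw₁pos k ω).le (hw₁lb k ω) (hSpos k ω) (hSub k ω)
    have hfreq : ∃ᶠ n in atTop, ω ∈ s n := mem_limsup_iff_frequently_mem.1 (hω.2 hdiv)
    have hgrow : ∀ j : ℕ, ∃ m, a₁ + j * Δ₁ ≤ w₁ m ω := by
      intro j
      induction j with
      | zero => exact ⟨0, by simp [hw₁0]⟩
      | succ j ih =>
        obtain ⟨m, hm⟩ := ih
        obtain ⟨n, hn, hmem⟩ := frequently_atTop.1 hfreq (m+1)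
        obtain ⟨k, rfl⟩ : ∃ k, n = k + 1 := ⟨n - 1, by omega⟩
        have hk : ξ k ω = true := hmem
        have : w₁ (k+1) ω = w₁ k ω + Δ₁ := by rw [hrec₁, if_pos hk]
        have hmk : w₁ m ω ≤ w₁ k ω := hw₁mono ω (by omega)
        refine ⟨k+1, ?_⟩
        push_cast
        linarith
    obtain ⟨j, hj⟩ := exists_nat_ge ((W - a₁) / Δ₁)
    obtain ⟨m, hm⟩ := hgrow j
    refine ⟨m, ?_⟩
    rw [div_le_iff₀ hΔ₁] at hj
    linarith
  -- per-m supermartingale argument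
  have hmain : ∀ m : ℕ, ∀ᵐ ω ∂μ, W ≤ w₁ m ω →
      Tendsto (fun n => w₂ (m+n) ω / w₁ (m+n) ω) atTop (𝓝 0) := by
    intro m
    have hWpos : 0 < W := by
      rw [hWdef]
      exact div_pos (by nlinarith) (by linarith)
    have hεpos : (0:ℝ) < (Δ₁ - Δ₂) / 2 := by linarith
    have hεW : (Δ₁ - Δ₂) / 2 < W := by
      rw [hWdef, lt_div_iff₀ (by linarith : (0:ℝ) < Δ₁ - Δ₂)]
      nlinarith
    set A : Set Ω := {ω | W ≤ w₁ m ω} with hAdef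
    have hAm : MeasurableSet[ℱ m] A := measurableSet_le measurable_const (hmw₁ m)
    have hA0 : MeasurableSet A := (ℱ.le m) A hAm
    set f : ℕ → Ω → ℝ := fun n => A.indicator (fun ω => w₂ (m+n) ω / w₁ (m+n) ω) with hfdef
    set 𝒢 : Filtration ℕ m0 :=
      ⟨fun n => ℱ (m+n), fun i j hij => ℱ.mono (by omega), fun n => ℱ.le _⟩ with h𝒢def
    have h𝒢n : ∀ n, 𝒢 n = ℱ (m+n) := fun n => rfl
    have hA' : ∀ n, MeasurableSet[ℱ (m+n)] A := fun n => ℱ.mono (by omega) A hAm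
    have hfnonneg : ∀ n ω, 0 ≤ f n ω :=
      fun n ω => Set.indicator_nonneg (fun ω' _ => hRnonneg (m+n) ω') ω
    have hfle : ∀ n ω, f n ω ≤ w₂ (m+n) ω / w₁ (m+n) ω :=
      fun n ω => Set.indicator_le_self' (fun ω' _ => hRnonneg (m+n) ω') ω
    have hfint : ∀ n, Integrable (f n) μ := fun n => (hRint (m+n)).indicator hA0
    have hadp : StronglyAdapted 𝒢 f := by
      intro n
      exact (((hmw₂ (m+n)).div (hmw₁ (m+n))).indicator (hA' n)).stronglyMeasurable
    set C₀ : ℝ := (a₂ + m * Δ₂) / a₁ with hC₀def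
    have hC₀pos : 0 < C₀ := by positivity
    set c : ℕ → ℝ := fun k => 1 - (Δ₁ - Δ₂)/2 / (a₁ + a₂ + W + (m+k) * Δ₁) with hcdef
    set u : ℕ → ℝ := fun k => (Δ₁ - Δ₂)/2 / (a₁ + a₂ + W + (m+k) * Δ₁) with hudef
    have hden : ∀ k : ℕ, (0:ℝ) < a₁ + a₂ + W + (m+k) * Δ₁ := by
      intro k
      have : (0:ℝ) ≤ (m+k : ℕ) * Δ₁ := by positivity
      push_cast at this ⊢
      nlinarith
    have hupos : ∀ k, 0 < u k := fun k => div_pos hεpos (hden k)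
    have hu1 : ∀ k, u k < 1 := by
      intro k
      rw [hudef]
      rw [div_lt_one (hden k)]
      have : (0:ℝ) ≤ (m+k : ℕ) * Δ₁ := by positivity
      push_cast at this ⊢
      nlinarith
    have hc01 : ∀ k, 0 < c k ∧ c k ≤ 1 := by
      intro k
      constructor
      · have := hu1 k
        rw [hudef] at this
        rw [hcdef]
        simp only
        linarith
      · have := hupos k
        rw [hudef] at this
        rw [hcdef]
        simp only
        linarith
    -- the conditional drift bound
    set g : ℕ → Ω → ℝ := fun n => A.indicator (fun ω => (w₂ (m+n) ω / w₁ (m+n) ω)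
        * (1 - (Δ₁ - Δ₂)/2 / (w₁ (m+n) ω + w₂ (m+n) ω))) with hgdef
    have habs1 : ∀ n ω, |1 - (Δ₁ - Δ₂)/2 / (w₁ (m+n) ω + w₂ (m+n) ω)| ≤ 1 + (Δ₁-Δ₂)/2/(a₁+a₂) := by
      intro n ω
      have h1 : 0 < (Δ₁-Δ₂)/2/(a₁+a₂) := by positivity
      have h2 : (Δ₁ - Δ₂)/2 / (w₁ (m+n) ω + w₂ (m+n) ω) ≤ (Δ₁-Δ₂)/2/(a₁+a₂) := by
        apply div_le_div_of_nonneg_left hεpos.le (by positivity)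
        linarith [hw₁lb (m+n) ω, hw₂lb (m+n) ω]
      have h3 : 0 ≤ (Δ₁ - Δ₂)/2 / (w₁ (m+n) ω + w₂ (m+n) ω) :=
        div_nonneg hεpos.le (hSpos (m+n) ω).le
      rw [abs_le]
      constructor <;> linarith
    have hgint : ∀ n, Integrable (g n) μ := by
      intro n
      apply Integrable.indicator _ hA0
      apply hint _ ((a₂ + (m+n) * Δ₂) / a₁ * (1 + (Δ₁-Δ₂)/2/(a₁+a₂)))
      · exact (((hmw₂ (m+n)).div (hmw₁ (m+n))).mono (ℱ.le (m+n)) le_rfl).mul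
          ((measurable_const.sub (measurable_const.div
            (((hmw₁ (m+n)).add (hmw₂ (m+n))).mono (ℱ.le (m+n)) le_rfl))))
      · intro ω
        rw [abs_mul]
        apply mul_le_mul _ (habs1 n ω) (abs_nonneg _) (by positivity)
        rw [abs_of_nonneg (hRnonneg (m+n) ω)]
        have := hRb (m+n) ω
        push_cast at this ⊢
        linarith
    have hgpoint : ∀ n ω, g n ω ≤ c n * f n ω := by
      intro n ω
      by_cases hω : ω ∈ A
      · rw [hgdef, hfdef]
        simp only [Set.indicator_of_mem hω]
        have hR0 : 0 ≤ w₂ (m+n) ω / w₁ (m+n) ω := hRnonneg (m+n) ω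
        rw [mul_comm (c n)]
        apply mul_le_mul_of_nonneg_left _ hR0
        rw [hcdef]
        simp only
        have hSle : w₁ (m+n) ω + w₂ (m+n) ω ≤ a₁ + a₂ + W + (m+n) * Δ₁ := by
          have := hSub (m+n) ω
          push_cast at this ⊢
          linarith
        have := div_le_div_of_nonneg_left hεpos.le (hSpos (m+n) ω) hSle
        linarith
      · rw [hgdef, hfdef]
        simp [Set.indicator_of_notMem hω]
    have hcond : ∀ n, μ[f (n+1)|𝒢 n] ≤ᵐ[μ] g n := by
      intro n
      have h1 : μ[f (n+1)|𝒢 n] =ᵐ[μ]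
          A.indicator (μ[(fun ω => w₂ (m+n+1) ω / w₁ (m+n+1) ω)|ℱ (m+n)]) := by
        have e1 : f (n+1) = A.indicator (fun ω => w₂ (m+n+1) ω / w₁ (m+n+1) ω) := rfl
        rw [e1]
        exact condExp_indicator (m := ℱ (m+n)) (hRint (m+n+1)) (hA' n)
      refine h1.trans_le ?_
      have h2 := hstep (m+n)
      filter_upwards [h2] with ω hω
      by_cases hmem : ω ∈ A
      · simp only [hgdef]
        rw [Set.indicator_of_mem hmem, Set.indicator_of_mem hmem, hω]
        have hx := hw₁pos (m+n) ω
        have hy := hw₂pos (m+n) ω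
        have hWx : W ≤ w₁ (m+n) ω := le_trans hmem (hw₁mono ω (by omega))
        rw [hWdef] at hWx
        exact polya_key_drift hΔ₂ hΔ hx hy hWx
      · simp only [hgdef]
        rw [Set.indicator_of_notMem hmem, Set.indicator_of_notMem hmem]
    have hsuper : Supermartingale f 𝒢 μ := by
      apply supermartingale_nat hadp hfint
      intro n
      refine (hcond n).trans (ae_of_all _ fun ω => ?_)
      refine (hgpoint n ω).trans ?_
      have := (hc01 n).2
      have := hfnonneg n ω
      nlinarith
    -- expectation decay
    have hrecE : ∀ n, ∫ ω, f (n+1) ω ∂μ ≤ c n * ∫ ω, f n ω ∂μ := by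
      intro n
      have h0 : ∫ ω, f (n+1) ω ∂μ = ∫ ω, (μ[f (n+1)|𝒢 n]) ω ∂μ :=
        (integral_condExp (𝒢.le n)).symm
      rw [h0]
      have h1 : ∫ ω, (μ[f (n+1)|𝒢 n]) ω ∂μ ≤ ∫ ω, g n ω ∂μ :=
        integral_mono_ae integrable_condExp (hgint n) (hcond n)
      refine h1.trans ?_
      calc ∫ ω, g n ω ∂μ ≤ ∫ ω, c n * f n ω ∂μ :=
            integral_mono (hgint n) ((hfint n).const_mul _) (fun ω => hgpoint n ω)
        _ = c n * ∫ ω, f n ω ∂μ := integral_const_mul _ _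
    have hE0 : ∫ ω, f 0 ω ∂μ ≤ C₀ := by
      have h1 : ∀ ω, f 0 ω ≤ C₀ := by
        intro ω
        refine (hfle 0 ω).trans ?_
        have := hRb (m+0) ω
        simpa using this
      calc ∫ ω, f 0 ω ∂μ ≤ ∫ _ω, C₀ ∂μ := integral_mono (hfint 0) (integrable_const _) h1
        _ = C₀ := by simp
    have hEnonneg : ∀ n, 0 ≤ ∫ ω, f n ω ∂μ := fun n => integral_nonneg (hfnonneg n)
    have hEprod : ∀ n, ∫ ω, f n ω ∂μ ≤ C₀ * ∏ k ∈ Finset.range n, c k := by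
      intro n
      induction n with
      | zero => simpa using hE0
      | succ n ih =>
        calc ∫ ω, f (n+1) ω ∂μ ≤ c n * ∫ ω, f n ω ∂μ := hrecE n
          _ ≤ c n * (C₀ * ∏ k ∈ Finset.range n, c k) :=
              mul_le_mul_of_nonneg_left ih (hc01 n).1.le
          _ = C₀ * ∏ k ∈ Finset.range (n+1), c k := by
              rw [Finset.prod_range_succ]; ring
    have hprodexp : ∀ n, ∏ k ∈ Finset.range n, c k
        ≤ Real.exp (- ∑ k ∈ Finset.range n, u k) := by
      intro n
      have h1 : ∀ k ∈ Finset.range n, c k ≤ Real.exp (-u k) := by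
        intro k _
        have := Real.add_one_le_exp (-u k)
        have hck : c k = 1 - u k := by rw [hcdef, hudef]
        linarith
      calc ∏ k ∈ Finset.range n, c k ≤ ∏ k ∈ Finset.range n, Real.exp (-u k) :=
            Finset.prod_le_prod (fun k _ => (hc01 k).1.le) h1
        _ = Real.exp (∑ k ∈ Finset.range n, -u k) := (Real.exp_sum _ _).symm
        _ = Real.exp (- ∑ k ∈ Finset.range n, u k) := by rw [Finset.sum_neg_distrib]
    have hsum_top : Tendsto (fun n => ∑ k ∈ Finset.range n, u k) atTop atTop := by
      set D : ℝ := a₁ + a₂ + W + m * Δ₁ + Δ₁ with hDdef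
      have hDpos : 0 < D := by
        have : (0:ℝ) ≤ (m:ℝ) * Δ₁ := by positivity
        rw [hDdef]; nlinarith
      have hcpos : (0:ℝ) < (Δ₁ - Δ₂)/2 / D := by positivity
      apply tendsto_atTop_mono _
        (Tendsto.const_mul_atTop hcpos Real.tendsto_sum_range_one_div_nat_succ_atTop)
      intro n
      rw [Finset.mul_sum]
      apply Finset.sum_le_sum
      intro k _
      have hk1 : (0:ℝ) < (k:ℝ) + 1 := by positivity
      have h1 : (Δ₁ - Δ₂)/2 / D * (1 / ((k:ℝ) + 1)) = (Δ₁ - Δ₂)/2 / (D * ((k:ℝ)+1)) := by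
        field_simp
      rw [h1, hudef]
      apply div_le_div_of_nonneg_left hεpos.le (hden k)
      have hm0 : (0:ℝ) ≤ (m:ℝ) * Δ₁ := by positivity
      have hk0 : (0:ℝ) ≤ (k:ℝ) * Δ₁ := by positivity
      rw [hDdef]
      nlinarith [mul_nonneg (Nat.cast_nonneg k : (0:ℝ) ≤ k) hWpos.le,
        mul_nonneg (Nat.cast_nonneg k : (0:ℝ) ≤ k) (by positivity : (0:ℝ) ≤ a₁+a₂),
        mul_nonneg (Nat.cast_nonneg k : (0:ℝ) ≤ k) hm0]
    have hEtend : Tendsto (fun n => ∫ ω, f n ω ∂μ) atTop (𝓝 0) := by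
      apply squeeze_zero hEnonneg
        (fun n => (hEprod n).trans (mul_le_mul_of_nonneg_left (hprodexp n) hC₀pos.le))
      have h1 : Tendsto (fun n => - ∑ k ∈ Finset.range n, u k) atTop atBot :=
        tendsto_neg_atTop_atBot.comp hsum_top
      have h2 : Tendsto (fun n => Real.exp (- ∑ k ∈ Finset.range n, u k)) atTop (𝓝 0) :=
        Real.tendsto_exp_atBot.comp h1
      have := h2.const_mul C₀
      simpa using this
    -- a.e. convergence of f to some limit
    have hbdd : ∀ n, eLpNorm ((-f) n) 1 μ ≤ ((C₀.toNNReal : ℝ≥0) : ℝ≥0∞) := by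
      intro n
      have h1 : (-f) n = -(f n) := rfl
      rw [h1, eLpNorm_neg]
      have h2 : eLpNorm (f n) 1 μ = ENNReal.ofReal (∫ ω, f n ω ∂μ) := by
        rw [eLpNorm_one_eq_lintegral_enorm,
          ofReal_integral_eq_lintegral_ofReal (hfint n) (ae_of_all _ (hfnonneg n))]
        apply lintegral_congr
        intro ω
        rw [← Real.enorm_eq_ofReal (hfnonneg n ω)]
      rw [h2]
      have h3 : ∫ ω, f n ω ∂μ ≤ C₀ := by
        refine (hEprod n).trans ?_
        have : ∏ k ∈ Finset.range n, c k ≤ 1 :=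
          Finset.prod_le_one (fun k _ => (hc01 k).1.le) (fun k _ => (hc01 k).2)
        nlinarith
      have : ENNReal.ofReal C₀ = ((C₀.toNNReal : ℝ≥0) : ℝ≥0∞) := rfl
      rw [← this]
      exact ENNReal.ofReal_le_ofReal h3
    have hconv := (hsuper.neg).exists_ae_tendsto_of_bdd hbdd
    -- the limit is zero a.e.
    have hliminf0 : (fun ω => liminf (fun n => ENNReal.ofReal (f n ω)) atTop) =ᵐ[μ] 0 := by
      have hmeasf : ∀ n, Measurable (fun ω => ENNReal.ofReal (f n ω)) := by
        intro n
        exact (((hmw₂ (m+n)).div (hmw₁ (m+n))).mono (ℱ.le (m+n)) le_rfl |>.indicator hA0).ennreal_ofReal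
      have h1 : ∫⁻ ω, liminf (fun n => ENNReal.ofReal (f n ω)) atTop ∂μ = 0 := by
        apply le_antisymm _ zero_le
        refine (lintegral_liminf_le hmeasf).trans ?_
        have h2 : ∀ n, ∫⁻ ω, ENNReal.ofReal (f n ω) ∂μ = ENNReal.ofReal (∫ ω, f n ω ∂μ) :=
          fun n => (ofReal_integral_eq_lintegral_ofReal (hfint n) (ae_of_all _ (hfnonneg n))).symm
        have h3 : Tendsto (fun n => ∫⁻ ω, ENNReal.ofReal (f n ω) ∂μ) atTop (𝓝 0) := by
          simp_rw [h2]
          have := ENNReal.tendsto_ofReal hEtend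
          simpa using this
        rw [h3.liminf_eq]
      exact (lintegral_eq_zero_iff (Measurable.liminf hmeasf)).1 h1
    filter_upwards [hconv, hliminf0] with ω hω hl0 hWω
    obtain ⟨L, hL⟩ := hω
    have hfL : Tendsto (fun n => f n ω) atTop (𝓝 (-L)) := by
      have : Tendsto (fun n => -((-f) n ω)) atTop (𝓝 (-L)) := hL.neg
      simpa using this
    have hLnonneg : 0 ≤ -L := ge_of_tendsto' hfL (fun n => hfnonneg n ω) |>.trans_eq rfl
    have hofL : liminf (fun n => ENNReal.ofReal (f n ω)) atTop = ENNReal.ofReal (-L) :=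
      (ENNReal.tendsto_ofReal hfL).liminf_eq
    have hL0 : -L = 0 := by
      rw [hofL] at hl0
      have := ENNReal.ofReal_eq_zero.1 hl0
      linarith
    have hmem : ω ∈ A := hWω
    have : Tendsto (fun n => f n ω) atTop (𝓝 0) := by rw [← hL0]; exact hfL
    refine this.congr ?_
    intro n
    rw [hfdef]
    simp [Set.indicator_of_mem hmem]
  -- combine everything
  rw [← ae_all_iff] at hmain
  filter_upwards [hBC, hmain] with ω hex hm
  obtain ⟨m, hWm⟩ := hex
  have h1 : Tendsto (fun n => w₂ (m+n) ω / w₁ (m+n) ω) atTop (𝓝 0) := hm m hWm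
  have h2 : Tendsto (fun n => w₂ n ω / w₁ n ω) atTop (𝓝 0) := by
    rw [← tendsto_add_atTop_iff_nat m]
    refine h1.congr ?_
    intro n
    rw [Nat.add_comm]
  apply squeeze_zero (fun n => div_nonneg (hw₂pos n ω).le (hSpos n ω).le)
    (fun n => ?_) h2
  exact div_le_div_of_nonneg_left (hw₂pos n ω).le (hw₁pos n ω) (by linarith [hw₂pos n ω])
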